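/- Let L be an n×n symmetric integer matrix (n ≥ 4) and L' its Chio condensation at (n,n). For all k with 2 ≤ k ≤ n−2, the k-th invariant factor α'_k = D_k(L')/D_{k−1}(L') divides (g_n(L))²·d_n·α_{k+1}, where α_{k+1} = D_{k+1}(L)/D_k(L), d_n = ℓ_{n,n}, and g_n(L) is the gcd of the last row of L. (Assume D_{k-1}(L') and D_k(L) are nonzero so the quotients are defined.) -/

import Mathlib

open Matrix

/-- `Dk B k` is the gcd of all `k × k` minors of `B`. -/
noncomputable def Dk {m n : ℕ} (B : Matrix (Fin m) (Fin n) ℤ) (k : ℕ) : ℤ :=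
  Finset.univ.gcd fun p : (Fin k ↪ Fin m) × (Fin k ↪ Fin n) =>
    (B.submatrix p.1 p.2).det

/-- `DkStar B k` is the gcd of all `k × k` minors of `B` whose row set contains the
last row and whose column set contains the last column. -/
noncomputable def DkStar {m n : ℕ} (B : Matrix (Fin (m+1)) (Fin (n+1)) ℤ) (k : ℕ) : ℤ :=
  (Finset.univ.filter fun p : (Fin k ↪ Fin (m+1)) × (Fin k ↪ Fin (n+1)) =>
    (∃ i, p.1 i = Fin.last m) ∧ (∃ j, p.2 j = Fin.last n)).gcd
    fun p => (B.submatrix p.1 p.2).det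

/-- Chio condensation of an `(n+1) × (n+1)` matrix at the entry `(n,n)`. -/
def chio {n : ℕ} (L : Matrix (Fin (n+1)) (Fin (n+1)) ℤ) : Matrix (Fin n) (Fin n) ℤ :=
  fun i j => L i.castSucc j.castSucc * L (Fin.last n) (Fin.last n)
    - L i.castSucc (Fin.last n) * L (Fin.last n) j.castSucc

/-- gcd of the entries of the last row. -/
def lastRowGcd {n : ℕ} (L : Matrix (Fin (n+1)) (Fin (n+1)) ℤ) : ℤ :=
  Finset.univ.gcd fun j => L (Fin.last n) j

/-- Key integer lemma: if `h² ∣ a*b` and `h ∣ a - b` then `h ∣ a`. -/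
theorem intKey {h a b : ℤ} (h2 : h ^ 2 ∣ a * b) (h1 : h ∣ a - b) : h ∣ a := by
  by_cases hh : h = 0
  · subst hh
    rw [zero_dvd_iff] at h1
    have hab : a = b := by omega
    subst hab
    have : a * a = 0 := by
      have := h2
      rwa [show (0:ℤ)^2 = 0 by ring, zero_dvd_iff] at this
    have := mul_self_eq_zero.mp this
    simp [this]
  · have hGpos : 0 < Int.gcd a h := Int.gcd_pos_of_ne_zero_right a hh
    set G : ℤ := (Int.gcd a h : ℤ) with hGdef
    have hGne : G ≠ 0 := by
      simp only [hGdef, ne_eq, Int.natCast_eq_zero]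
      omega
    have hGa : G ∣ a := Int.gcd_dvd_left a h
    have hGh : G ∣ h := Int.gcd_dvd_right a h
    obtain ⟨a', ha'⟩ := hGa
    obtain ⟨h', hh'⟩ := hGh
    have hcop : IsCoprime a' h' := by
      rw [Int.isCoprime_iff_gcd_eq_one]
      have := Int.gcd_div_gcd_div_gcd hGpos
      rwa [← hGdef, ha', hh', Int.mul_ediv_cancel_left _ hGne, Int.mul_ediv_cancel_left _ hGne] at this
    obtain ⟨c, hc⟩ := h1
    have hb : b = a - h * c := by omega
    have key : h' ^ 2 ∣ a' * (a' - h' * c) := by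
      have : G ^ 2 * h' ^ 2 ∣ G ^ 2 * (a' * (a' - h' * c)) := by
        calc G ^ 2 * h' ^ 2 = h ^ 2 := by rw [hh']; ring
        _ ∣ a * b := h2
        _ = G ^ 2 * (a' * (a' - h' * c)) := by rw [hb, ha', hh']; ring
      exact (mul_dvd_mul_iff_left (pow_ne_zero 2 hGne)).mp this
    have hcop2 : IsCoprime (h' ^ 2) a' := (hcop.symm).pow_left
    have : h' ^ 2 ∣ a' - h' * c := hcop2.dvd_of_dvd_mul_left key
    have hh'a : h' ∣ a' := by
      have h1' : h' ∣ a' - h' * c := dvd_trans (dvd_pow_self h' two_ne_zero) this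
      have h2' : h' ∣ h' * c := dvd_mul_right _ _
      have : a' = (a' - h' * c) + h' * c := by ring
      rw [this]; exact dvd_add h1' h2'
    have : IsUnit h' := hcop.isUnit_of_dvd' hh'a dvd_rfl
    rcases Int.isUnit_iff.mp this with h1' | h1' <;>
      · rw [ha']; rw [h1'] at hh'
        exact Dvd.dvd.mul_right (by rw [hh']; simp) a'

/-- snoc of an embedding with a fresh element is an embedding. -/
def snocEmb {s : ℕ} {α : Type*} (e : Fin s ↪ α) (x : α) (hx : ∀ i, e i ≠ x) :
    Fin (s+1) ↪ α :=
  ⟨Fin.snoc e x, by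
    intro a b hab
    induction a using Fin.lastCases with
    | last =>
      induction b using Fin.lastCases with
      | last => rfl
      | cast b =>
        rw [Fin.snoc_last, Fin.snoc_castSucc] at hab
        exact absurd hab.symm (hx b)
    | cast a =>
      induction b using Fin.lastCases with
      | last =>
        rw [Fin.snoc_last, Fin.snoc_castSucc] at hab
        exact absurd hab (hx a)
      | cast b =>
        rw [Fin.snoc_castSucc, Fin.snoc_castSucc] at hab
        exact congrArg Fin.castSucc (e.injective hab)⟩

@[simp] lemma snocEmb_castSucc {s : ℕ} {α : Type*} (e : Fin s ↪ α) (x : α)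
    (hx : ∀ i, e i ≠ x) (i : Fin s) : snocEmb e x hx i.castSucc = e i := by
  exact Fin.snoc_castSucc (α := fun _ => α) (p := ⇑e) (x := x) (i := i)

@[simp] lemma snocEmb_last {s : ℕ} {α : Type*} (e : Fin s ↪ α) (x : α)
    (hx : ∀ i, e i ≠ x) : snocEmb e x hx (Fin.last s) = x := by
  exact Fin.snoc_last (α := fun _ => α) (p := ⇑e) (x := x)

lemma exists_third {m : ℕ} (hm : 3 ≤ m) (i b : Fin m) : ∃ k : Fin m, k ≠ i ∧ k ≠ b := by
  have hcard : ({i, b} : Finset (Fin m)).card ≤ 2 :=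
    le_trans (Finset.card_insert_le _ _) (by simp)
  have hpos : 0 < (({i, b} : Finset (Fin m))ᶜ).card := by
    rw [Finset.card_compl]
    simp only [Fintype.card_fin]
    omega
  obtain ⟨k, hk⟩ := Finset.card_pos.mp hpos
  rw [Finset.mem_compl, Finset.mem_insert, Finset.mem_singleton] at hk
  push_neg at hk
  exact ⟨k, hk.1, hk.2⟩

section Pinned

variable {n s : ℕ} (L : Matrix (Fin (n+1)) (Fin (n+1)) ℤ)

lemma dkstar_dvd_pinned {t : ℕ} (p1 p2 : Fin t ↪ Fin (n+1))
    (h1 : ∃ i, p1 i = Fin.last n) (h2 : ∃ j, p2 j = Fin.last n) :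
    DkStar L t ∣ (L.submatrix p1 p2).det := by
  have hm : (⟨p1, p2⟩ : (Fin t ↪ Fin (n+1)) × (Fin t ↪ Fin (n+1))) ∈
      (Finset.univ.filter fun p : (Fin t ↪ Fin (n+1)) × (Fin t ↪ Fin (n+1)) =>
        (∃ i, p.1 i = Fin.last n) ∧ (∃ j, p.2 j = Fin.last n)) := by
    simp only [Finset.mem_filter, Finset.mem_univ, true_and]
    exact ⟨h1, h2⟩
  exact Finset.gcd_dvd hm

variable (F G : Fin (s+1) ↪ Fin (n+1)) {α β : Fin (s+1)}

lemma adj_pinned (hG : G α = Fin.last n) (hF : F β = Fin.last n)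
    {j k : Fin (s+1)} (hj : j ≠ α) (hk : k ≠ β) :
    DkStar L s ∣ (L.submatrix F G).adjugate j k := by
  rw [Matrix.adjugate_fin_succ_eq_det_submatrix]
  apply Dvd.dvd.mul_left
  rw [Matrix.submatrix_submatrix]
  obtain ⟨z1, hz1⟩ := Fin.exists_succAbove_eq (Ne.symm hk)
  obtain ⟨z2, hz2⟩ := Fin.exists_succAbove_eq (Ne.symm hj)
  exact dkstar_dvd_pinned L ((Fin.succAboveEmb k).trans F) ((Fin.succAboveEmb j).trans G)
    ⟨z1, by simp [Function.Embedding.trans_apply, Fin.coe_succAboveEmb, hz1, hF]⟩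
    ⟨z2, by simp [Function.Embedding.trans_apply, Fin.coe_succAboveEmb, hz2, hG]⟩

lemma offdiag (hG : G α = Fin.last n) (hF : F β = Fin.last n)
    {i k : Fin (s+1)} (hik : i ≠ k) (hk : k ≠ β) :
    DkStar L s ∣ (L.submatrix F G) i α * (L.submatrix F G).adjugate α k := by
  set W := L.submatrix F G with hW
  have hrel : ∑ j, W i j * W.adjugate j k = 0 := by
    have h0 := congrFun (congrFun (Matrix.mul_adjugate W) i) k
    simpa [Matrix.mul_apply, Matrix.one_apply, hik] using h0
  have hsum := Finset.add_sum_erase Finset.univ (fun j => W i j * W.adjugate j k)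
    (Finset.mem_univ α)
  have hsplit : W i α * W.adjugate α k
      = - ∑ j ∈ Finset.univ.erase α, W i j * W.adjugate j k := by
    omega
  rw [hsplit]
  apply dvd_neg.mpr
  apply Finset.dvd_sum
  intro j hj
  exact Dvd.dvd.mul_left (adj_pinned L F G hG hF (Finset.ne_of_mem_erase hj) hk) _

lemma diag_sub (hG : G α = Fin.last n) (hF : F β = Fin.last n)
    {i : Fin (s+1)} (hi : i ≠ β) :
    DkStar L s ∣ (L.submatrix F G).det - (L.submatrix F G) i α * (L.submatrix F G).adjugate α i := by
  set W := L.submatrix F G with hW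
  have hrel : ∑ j, W i j * W.adjugate j i = W.det := by
    have h0 := congrFun (congrFun (Matrix.mul_adjugate W) i) i
    simpa [Matrix.mul_apply, Matrix.one_apply] using h0
  have hsum := Finset.add_sum_erase Finset.univ (fun j => W i j * W.adjugate j i)
    (Finset.mem_univ α)
  have hsplit : W.det - W i α * W.adjugate α i
      = ∑ j ∈ Finset.univ.erase α, W i j * W.adjugate j i := by
    omega
  rw [hsplit]
  apply Finset.dvd_sum
  intro j hj
  exact Dvd.dvd.mul_left (adj_pinned L F G hG hF (Finset.ne_of_mem_erase hj) hi) _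

lemma diag_dvd (hG : G α = Fin.last n) (hF : F β = Fin.last n) (hs : 2 ≤ s)
    {i : Fin (s+1)} (hi : i ≠ β) :
    DkStar L s ∣ (L.submatrix F G) i α * (L.submatrix F G).adjugate α i := by
  obtain ⟨k, hk1, hk2⟩ := exists_third (by omega : 3 ≤ s+1) i β
  set W := L.submatrix F G with hW
  apply intKey (b := W k α * W.adjugate α k)
  · have e1 : W i α * W.adjugate α i * (W k α * W.adjugate α k)
        = (W i α * W.adjugate α k) * (W k α * W.adjugate α i) := by ring
    rw [e1, pow_two]
    exact mul_dvd_mul (offdiag L F G hG hF (Ne.symm hk1) hk2) (offdiag L F G hG hF hk1 hi)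
  · have e2 : W i α * W.adjugate α i - W k α * W.adjugate α k
        = (W.det - W k α * W.adjugate α k) - (W.det - W i α * W.adjugate α i) := by ring
    rw [e2]
    exact dvd_sub (diag_sub L F G hG hF hk2) (diag_sub L F G hG hF hi)

end Pinned

section C2F
variable {n : ℕ} (L : Matrix (Fin (n+1)) (Fin (n+1)) ℤ)

lemma det_submatrix_zero_of_not_inj {s : ℕ} (e : Fin s → Fin (n+1)) {v : Fin s → Fin (n+1)}
    (hv : ¬ Function.Injective v) : (L.submatrix e v).det = 0 := by
  rw [← Matrix.det_transpose]
  obtain ⟨j1, j2, hj, hne⟩ := Function.not_injective_iff.mp hv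
  apply Matrix.det_zero_of_row_eq hne
  funext i
  simp [Matrix.transpose_apply, hj]

lemma C2F {s : ℕ} (hs : 2 ≤ s) (hsn : s ≤ n)
    (r : Fin (n+1)) (e : Fin s ↪ Fin (n+1)) (he : ∃ i, e i = Fin.last n)
    (v : Fin s → Fin (n+1)) :
    DkStar L s ∣ L r (Fin.last n) * (L.submatrix e v).det := by
  by_cases hv : Function.Injective v
  · by_cases hvn : ∃ j, v j = Fin.last n
    · exact Dvd.dvd.mul_left (dkstar_dvd_pinned L e ⟨v, hv⟩ he hvn) _
    · push_neg at hvn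
      set u : Fin s ↪ Fin (n+1) := ⟨v, hv⟩ with hu
      have hvn' : ∀ i, u i ≠ Fin.last n := hvn
      set G : Fin (s+1) ↪ Fin (n+1) := snocEmb u (Fin.last n) hvn' with hGdef
      obtain ⟨t0, ht0⟩ := he
      have hG : G (Fin.last s) = Fin.last n := by simp [hGdef]
      by_cases hr : ∃ t, e t = r
      · obtain ⟨t, ht⟩ := hr
        have hx : ∃ x, ∀ i, e i ≠ x := by
          by_contra hcon
          push_neg at hcon
          have hsurj : Function.Surjective e := by
            intro x
            obtain ⟨i, hi⟩ := hcon x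
            exact ⟨i, hi⟩
          have := Fintype.card_le_of_surjective _ hsurj
          simp only [Fintype.card_fin] at this
          omega
        obtain ⟨x, hxf⟩ := hx
        set F : Fin (s+1) ↪ Fin (n+1) := snocEmb e x hxf with hFdef
        have hF : F t0.castSucc = Fin.last n := by simp [hFdef, ht0]
        have hadj : (L.submatrix F G).adjugate (Fin.last s) (Fin.last s)
            = (L.submatrix e v).det := by
          rw [Matrix.adjugate_fin_succ_eq_det_submatrix, Fin.succAbove_last,
            Matrix.submatrix_submatrix]
          have h1 : (⇑F ∘ Fin.castSucc) = ⇑e := funext fun i => by simp [hFdef]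
          have h2 : (⇑G ∘ Fin.castSucc) = v := funext fun i => by simp [hGdef, hu]
          rw [h1, h2, show ((Fin.last s : Fin (s+1)) : ℕ) + ((Fin.last s : Fin (s+1)) : ℕ)
            = s + s from rfl, Even.neg_one_pow ⟨s, rfl⟩, one_mul]
        have hd := offdiag L F G hG hF (i := t.castSucc) (k := Fin.last s)
          (Fin.castSucc_lt_last t).ne (Fin.castSucc_lt_last t0).ne'
        rw [hadj] at hd
        have hent : (L.submatrix F G) t.castSucc (Fin.last s) = L r (Fin.last n) := by
          simp [hFdef, hGdef, ht]
        rwa [hent] at hd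
      · push_neg at hr
        have hrf : ∀ i, e i ≠ r := hr
        set F : Fin (s+1) ↪ Fin (n+1) := snocEmb e r hrf with hFdef
        have hF : F t0.castSucc = Fin.last n := by simp [hFdef, ht0]
        have hadj : (L.submatrix F G).adjugate (Fin.last s) (Fin.last s)
            = (L.submatrix e v).det := by
          rw [Matrix.adjugate_fin_succ_eq_det_submatrix, Fin.succAbove_last,
            Matrix.submatrix_submatrix]
          have h1 : (⇑F ∘ Fin.castSucc) = ⇑e := funext fun i => by simp [hFdef]
          have h2 : (⇑G ∘ Fin.castSucc) = v := funext fun i => by simp [hGdef, hu]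
          rw [h1, h2, show ((Fin.last s : Fin (s+1)) : ℕ) + ((Fin.last s : Fin (s+1)) : ℕ)
            = s + s from rfl, Even.neg_one_pow ⟨s, rfl⟩, one_mul]
        have hd := diag_dvd L F G hG hF hs (i := Fin.last s) (Fin.castSucc_lt_last t0).ne'
        rw [hadj] at hd
        have hent : (L.submatrix F G) (Fin.last s) (Fin.last s) = L r (Fin.last n) := by
          simp [hFdef, hGdef]
        rwa [hent] at hd
  · rw [det_submatrix_zero_of_not_inj L e hv, mul_zero]
    exact dvd_zero _

end C2F

lemma dvd_gcd_mul_of_forall {β : Type*} (t : Finset β) (f : β → ℤ) (C h : ℤ)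
    (hdvd : ∀ b ∈ t, h ∣ C * f b) : h ∣ C * t.gcd f := by
  have h1 : h ∣ t.gcd (fun b => C * f b) := Finset.dvd_gcd hdvd
  rw [Finset.gcd_mul_left] at h1
  exact h1.trans (mul_dvd_mul_right (normalize_associated C).dvd _)

section H1sec
variable {n : ℕ} (L : Matrix (Fin (n+1)) (Fin (n+1)) ℤ)

lemma H1 {s : ℕ} (hs : 2 ≤ s) (hsn : s ≤ n) (hsymm : L.IsSymm)
    (c₁ c₂ : Fin (n+1)) (e₁ e₂ : Fin s ↪ Fin (n+1)) :
    DkStar L s ∣ L (Fin.last n) c₂ * (L (Fin.last n) c₁ * (L.submatrix e₁ e₂).det) := by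
  have hsym : ∀ a : Fin (n+1), L (Fin.last n) a = L a (Fin.last n) :=
    fun a => (hsymm.apply (Fin.last n) a).symm
  by_cases hre : ∃ i, e₁ i = Fin.last n
  · rw [hsym c₁]
    exact Dvd.dvd.mul_left (C2F L hs hsn c₁ e₁ hre ⇑e₂) _
  · push_neg at hre
    set B : Matrix (Fin (s+1)) (Fin (s+1)) ℤ :=
      L.submatrix (Fin.snoc (⇑e₁) (Fin.last n)) (Fin.snoc (⇑e₂) c₁) with hB
    have hcol : ((Fin.snoc (⇑e₂) c₁ : Fin (s+1) → Fin (n+1)) ∘ Fin.castSucc) = ⇑e₂ :=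
      funext fun i => by simp
    have hrow : ((Fin.snoc (⇑e₁) (Fin.last n) : Fin (s+1) → Fin (n+1)) ∘ Fin.castSucc) = ⇑e₁ :=
      funext fun i => by simp
    have hdet := Matrix.det_succ_column B (Fin.last s)
    rw [Fin.sum_univ_castSucc] at hdet
    have hpow : (-1:ℤ) ^ (((Fin.last s : Fin (s+1)) : ℕ) + ((Fin.last s : Fin (s+1)) : ℕ)) = 1 := by
      have h0 : ((Fin.last s : Fin (s+1)) : ℕ) = s := rfl
      rw [h0]; exact Even.neg_one_pow ⟨s, rfl⟩
    have hBll : B (Fin.last s) (Fin.last s) = L (Fin.last n) c₁ := by simp [hB]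
    have hcofl : (B.submatrix (Fin.last s).succAbove (Fin.last s).succAbove)
        = L.submatrix e₁ e₂ := by
      rw [Fin.succAbove_last, hB, Matrix.submatrix_submatrix, hrow, hcol]
    rw [hpow, one_mul, hBll, hcofl] at hdet
    have hexp : L (Fin.last n) c₁ * (L.submatrix e₁ e₂).det
        = B.det - ∑ i : Fin s,
            ((-1 : ℤ) ^ (((i.castSucc : Fin (s+1)) : ℕ) + ((Fin.last s : Fin (s+1)) : ℕ))
              * B i.castSucc (Fin.last s)
              * (B.submatrix (i.castSucc).succAbove (Fin.last s).succAbove).det) := by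
      omega
    rw [hexp, mul_sub]
    apply dvd_sub
    · -- term: L last c₂ * B.det ; expand B.det along row 0
      have hrowexp := Matrix.det_succ_row_zero B
      rw [hrowexp, Finset.mul_sum]
      apply Finset.dvd_sum
      intro j _
      have hz : ∃ z, (0 : Fin (s+1)).succAbove z = Fin.last s := by
        apply Fin.exists_succAbove_eq
        rw [ne_eq, Fin.ext_iff]
        simp only [Fin.val_last, Fin.val_zero]
        omega
      obtain ⟨z, hzz⟩ := hz
      have hemb0 : ∃ i0, ((Fin.succAboveEmb (0 : Fin (s+1))).trans
          (snocEmb e₁ (Fin.last n) hre)) i0 = Fin.last n :=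
        ⟨z, by simp [Function.Embedding.trans_apply, hzz]⟩
      have hC := C2F L hs hsn c₂ ((Fin.succAboveEmb (0 : Fin (s+1))).trans
          (snocEmb e₁ (Fin.last n) hre)) hemb0
          ((Fin.snoc (⇑e₂) c₁ : Fin (s+1) → Fin (n+1)) ∘ Fin.succAbove j)
      rw [← hsym c₂] at hC
      have hfun : (Fin.snoc (⇑e₁) (Fin.last n) ∘ Fin.succ : Fin s → Fin (n+1))
          = ⇑((Fin.succAboveEmb (0 : Fin (s+1))).trans (snocEmb e₁ (Fin.last n) hre)) := by
        funext i
        simp only [Function.comp_apply, Function.Embedding.trans_apply,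
          Fin.coe_succAboveEmb, Fin.succAbove_zero]
        rfl
      have hcof : (B.submatrix Fin.succ j.succAbove).det
          = (L.submatrix (((Fin.succAboveEmb (0 : Fin (s+1))).trans
              (snocEmb e₁ (Fin.last n) hre)))
              ((Fin.snoc (⇑e₂) c₁ : Fin (s+1) → Fin (n+1)) ∘ Fin.succAbove j)).det := by
        rw [hB, Matrix.submatrix_submatrix, hfun]
      have heq : L (Fin.last n) c₂ * ((-1:ℤ) ^ (j : ℕ) * B 0 j * (B.submatrix Fin.succ j.succAbove).det)
          = (L (Fin.last n) c₂ * (B.submatrix Fin.succ j.succAbove).det)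
            * ((-1:ℤ) ^ (j : ℕ) * B 0 j) := by ring
      rw [heq, hcof]
      exact Dvd.dvd.mul_right hC _
    · rw [Finset.mul_sum]
      apply Finset.dvd_sum
      intro i _
      obtain ⟨z, hz⟩ := Fin.exists_succAbove_eq (Fin.castSucc_lt_last i).ne'
      have hcof : (B.submatrix (i.castSucc).succAbove (Fin.last s).succAbove).det
          = (L.submatrix ((Fin.succAboveEmb i.castSucc).trans (snocEmb e₁ (Fin.last n) hre)) ⇑e₂).det := by
        rw [Fin.succAbove_last, hB, Matrix.submatrix_submatrix, hcol]
        rfl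
      have hC := C2F L hs hsn c₂
        ((Fin.succAboveEmb i.castSucc).trans (snocEmb e₁ (Fin.last n) hre))
        ⟨z, by simp [Function.Embedding.trans_apply, hz]⟩ ⇑e₂
      rw [← hsym c₂] at hC
      have heq : L (Fin.last n) c₂ *
            ((-1 : ℤ) ^ (((i.castSucc : Fin (s+1)) : ℕ) + ((Fin.last s : Fin (s+1)) : ℕ))
              * B i.castSucc (Fin.last s)
              * (B.submatrix (i.castSucc).succAbove (Fin.last s).succAbove).det)
          = (L (Fin.last n) c₂ * (B.submatrix (i.castSucc).succAbove (Fin.last s).succAbove).det)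
            * ((-1 : ℤ) ^ (((i.castSucc : Fin (s+1)) : ℕ) + ((Fin.last s : Fin (s+1)) : ℕ))
              * B i.castSucc (Fin.last s)) := by ring
      rw [heq, hcof]
      exact Dvd.dvd.mul_right hC _

lemma dvd_gcd_mul_of_forall2 {β : Type*} (t : Finset β) (f : β → ℤ) (C h : ℤ)
    (hdvd : ∀ b ∈ t, h ∣ f b * C) : h ∣ t.gcd f * C := by
  have h1 : h ∣ t.gcd (fun b => f b * C) := Finset.dvd_gcd hdvd
  rw [Finset.gcd_mul_right] at h1
  exact h1.trans (mul_dvd_mul_left _ (normalize_associated C).dvd)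

lemma P1 {s : ℕ} (hs : 2 ≤ s) (hsn : s ≤ n) (hsymm : L.IsSymm) :
    DkStar L s ∣ (lastRowGcd L) ^ 2 * Dk L s := by
  have L1 : ∀ (c₁ : Fin (n+1)) (p : (Fin s ↪ Fin (n+1)) × (Fin s ↪ Fin (n+1))),
      DkStar L s ∣ lastRowGcd L * (L (Fin.last n) c₁ * (L.submatrix p.1 p.2).det) := by
    intro c₁ p
    exact dvd_gcd_mul_of_forall2 Finset.univ _ _ _
      (fun c₂ _ => H1 L hs hsn hsymm c₁ c₂ p.1 p.2)
  have L2 : ∀ (p : (Fin s ↪ Fin (n+1)) × (Fin s ↪ Fin (n+1))),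
      DkStar L s ∣ lastRowGcd L * ((L.submatrix p.1 p.2).det * lastRowGcd L) := by
    intro p
    apply dvd_gcd_mul_of_forall2 Finset.univ (fun c₁ => L (Fin.last n) c₁) _ _
    intro c₁ _
    have := L1 c₁ p
    exact (show lastRowGcd L * (L (Fin.last n) c₁ * (L.submatrix p.1 p.2).det)
      = L (Fin.last n) c₁ * ((L.submatrix p.1 p.2).det * lastRowGcd L) from by ring) ▸ this
  have L3 : DkStar L s ∣ Dk L s * (lastRowGcd L * lastRowGcd L) := by
    apply dvd_gcd_mul_of_forall2 Finset.univ _ _ _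
    intro p _
    have := L2 p
    exact (show lastRowGcd L * ((L.submatrix p.1 p.2).det * lastRowGcd L)
      = (L.submatrix p.1 p.2).det * (lastRowGcd L * lastRowGcd L) from by ring) ▸ this
  exact (show Dk L s * (lastRowGcd L * lastRowGcd L)
    = (lastRowGcd L) ^ 2 * Dk L s from by ring) ▸ L3

end H1sec

section Syl
variable {n : ℕ} (L : Matrix (Fin (n+1)) (Fin (n+1)) ℤ)

/-- extension of an index map, sending `last` to `last`. -/
def extFun {t : ℕ} (ρ : Fin t → Fin n) : Fin (t+1) → Fin (n+1) :=
  Fin.snoc (fun i => (ρ i).castSucc) (Fin.last n)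

@[simp] lemma extFun_castSucc {t : ℕ} (ρ : Fin t → Fin n) (i : Fin t) :
    extFun ρ i.castSucc = (ρ i).castSucc := by simp [extFun]

@[simp] lemma extFun_last {t : ℕ} (ρ : Fin t → Fin n) :
    extFun ρ (Fin.last t) = Fin.last n := by simp [extFun]

def extEmb {t : ℕ} (ρ : Fin t ↪ Fin n) : Fin (t+1) ↪ Fin (n+1) :=
  ⟨extFun ⇑ρ, by
    intro a b hab
    induction a using Fin.lastCases with
    | last =>
      induction b using Fin.lastCases with
      | last => rfl
      | cast b =>
        rw [extFun_last, extFun_castSucc] at hab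
        exact absurd hab.symm (Fin.castSucc_lt_last _).ne
    | cast a =>
      induction b using Fin.lastCases with
      | last =>
        rw [extFun_last, extFun_castSucc] at hab
        exact absurd hab (Fin.castSucc_lt_last _).ne
      | cast b =>
        rw [extFun_castSucc, extFun_castSucc] at hab
        exact congrArg Fin.castSucc (ρ.injective (Fin.castSucc_injective _ hab))⟩

@[simp] lemma extEmb_coe {t : ℕ} (ρ : Fin t ↪ Fin n) : ⇑(extEmb ρ) = extFun ⇑ρ := rfl

/-- Sylvester/Chio determinant identity, in multiplied form. -/
lemma chio_det_mul {t : ℕ} (ρ γ : Fin t → Fin n) :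
    ((chio L).submatrix ρ γ).det * L (Fin.last n) (Fin.last n)
      = (L (Fin.last n) (Fin.last n)) ^ t * (L.submatrix (extFun ρ) (extFun γ)).det := by
  set d := L (Fin.last n) (Fin.last n) with hd
  set A : Matrix (Fin t) (Fin t) ℤ :=
    L.submatrix (fun i => (ρ i).castSucc) (fun j => (γ j).castSucc) with hA
  set b : Matrix (Fin t) (Fin 1) ℤ := fun i _ => L (ρ i).castSucc (Fin.last n) with hb
  set c : Matrix (Fin 1) (Fin t) ℤ := fun _ j => L (Fin.last n) (γ j).castSucc with hc
  set D : Matrix (Fin 1) (Fin 1) ℤ := fun _ _ => d with hD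
  set M : Matrix (Fin t ⊕ Fin 1) (Fin t ⊕ Fin 1) ℤ := Matrix.fromBlocks A b c D with hM
  have hl : ∀ i : Fin t, (finSumFinEquiv (Sum.inl i) : Fin (t+1)) = i.castSucc :=
    fun i => rfl
  have hr : (finSumFinEquiv (Sum.inr (0 : Fin 1)) : Fin (t+1)) = Fin.last t := by
    ext; simp
  have claim1 : (L.submatrix (extFun ρ) (extFun γ)).det = M.det := by
    have hMeq : M = (L.submatrix (extFun ρ) (extFun γ)).submatrix
        ⇑finSumFinEquiv ⇑finSumFinEquiv := by
      ext i j
      cases i with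
      | inl i =>
        cases j with
        | inl j =>
          simp only [Matrix.submatrix_apply, hl]
          simp [hM, hA, Matrix.submatrix_apply]
        | inr j =>
          rw [Fin.eq_zero j]
          simp only [Matrix.submatrix_apply, hl, hr]
          rw [hM, Matrix.fromBlocks_apply₁₂]; simp [hb]
      | inr i =>
        rw [Fin.eq_zero i]
        cases j with
        | inl j =>
          simp only [Matrix.submatrix_apply, hl, hr]
          rw [hM, Matrix.fromBlocks_apply₂₁]; simp [hc]
        | inr j =>
          rw [Fin.eq_zero j]
          simp only [Matrix.submatrix_apply, hr]
          rw [hM, Matrix.fromBlocks_apply₂₂]; simp [hD, hd]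
    rw [hMeq, Matrix.det_submatrix_equiv_self]
  set N : Matrix (Fin t ⊕ Fin 1) (Fin t ⊕ Fin 1) ℤ :=
    Matrix.fromBlocks (d • (1 : Matrix (Fin t) (Fin t) ℤ)) 0 (-c) 1 with hN
  have h11 : A * (d • (1 : Matrix (Fin t) (Fin t) ℤ)) + b * (-c) = (chio L).submatrix ρ γ := by
    rw [Matrix.mul_smul, Matrix.mul_one]
    ext i j
    simp only [Matrix.add_apply, Matrix.smul_apply, smul_eq_mul, Matrix.mul_apply,
      Finset.univ_unique, Finset.sum_singleton, Matrix.neg_apply]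
    simp only [hA, hb, hc, Matrix.submatrix_apply, chio]
    ring
  have h21 : c * (d • (1 : Matrix (Fin t) (Fin t) ℤ)) + D * (-c) = 0 := by
    rw [Matrix.mul_smul, Matrix.mul_one]
    ext i j
    rw [Fin.eq_zero i]
    simp only [Matrix.add_apply, Matrix.smul_apply, smul_eq_mul, Matrix.mul_apply,
      Finset.univ_unique, Finset.sum_singleton, Matrix.neg_apply, Matrix.zero_apply]
    simp only [hc, hD]
    ring
  have claim2 : M * N = Matrix.fromBlocks ((chio L).submatrix ρ γ) b 0 D := by
    rw [hM, hN, Matrix.fromBlocks_multiply, h11, h21]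
    simp
  have hdetN : N.det = d ^ t := by
    rw [hN, Matrix.det_fromBlocks_zero₁₂, Matrix.det_one, mul_one, Matrix.det_smul,
      Matrix.det_one, mul_one, Fintype.card_fin]
  have hdetRHS : (Matrix.fromBlocks ((chio L).submatrix ρ γ) b 0 D).det
      = ((chio L).submatrix ρ γ).det * d := by
    rw [Matrix.det_fromBlocks_zero₂₁]
    congr 1
    exact Matrix.det_fin_one D
  have := congrArg Matrix.det claim2
  rw [Matrix.det_mul, hdetN, hdetRHS, ← claim1] at this
  rw [← this]
  ring

end Syl

section Final
variable {n : ℕ}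

lemma dvd_of_dvd_unit_mul {x y u : ℤ} (hu : u = 1 ∨ u = -1) (h : x ∣ u * y) : x ∣ y := by
  rcases hu with h1 | h1 <;> subst h1
  · simpa using h
  · simpa [neg_mul, dvd_neg] using h

lemma pinned_canonical {k : ℕ} (p : Fin (k+1) ↪ Fin (n+1)) (hp : ∃ i, p i = Fin.last n) :
    ∃ (ρ : Fin k ↪ Fin n) (σ : Equiv.Perm (Fin (k+1))), (⇑p ∘ ⇑σ) = extFun ⇑ρ := by
  obtain ⟨i0, hi0⟩ := hp
  set σ := Equiv.swap i0 (Fin.last k) with hσ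
  have hlast : p (σ (Fin.last k)) = Fin.last n := by
    rw [hσ]; simp [Equiv.swap_apply_right, hi0]
  have hne : ∀ j : Fin k, p (σ j.castSucc) ≠ Fin.last n := by
    intro j hj
    have h2 : p (σ j.castSucc) = p (σ (Fin.last k)) := by rw [hj, hlast]
    have h3 := σ.injective (p.injective h2)
    exact absurd h3 (Fin.castSucc_lt_last j).ne
  refine ⟨⟨fun j => (p (σ j.castSucc)).castPred (hne j), ?_⟩, σ, ?_⟩
  · intro a b hab
    have h4 : p (σ a.castSucc) = p (σ b.castSucc) := by
      have h5 := congrArg Fin.castSucc hab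
      rwa [Fin.castSucc_castPred, Fin.castSucc_castPred] at h5
    exact Fin.castSucc_injective _ (σ.injective (p.injective h4))
  · funext i
    induction i using Fin.lastCases with
    | last => simpa [extFun_last] using hlast
    | cast j =>
      simp only [Function.comp_apply, extFun_castSucc]
      exact (Fin.castSucc_castPred _ (hne j)).symm

lemma det_submatrix_perm {m : ℕ} (X : Matrix (Fin m) (Fin m) ℤ) (σ τ : Equiv.Perm (Fin m)) :
    ∃ u : ℤ, (u = 1 ∨ u = -1) ∧ (X.submatrix ⇑σ ⇑τ).det = u * X.det := by
  have h1 : (X.submatrix ⇑σ ⇑τ) = (X.submatrix ⇑σ id).submatrix id ⇑τ := by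
    rw [Matrix.submatrix_submatrix]; simp
  refine ⟨((Equiv.Perm.sign τ : ℤˣ) : ℤ) * ((Equiv.Perm.sign σ : ℤˣ) : ℤ), ?_, ?_⟩
  · rcases Int.units_eq_one_or (Equiv.Perm.sign τ) with h | h <;>
      rcases Int.units_eq_one_or (Equiv.Perm.sign σ) with h' | h' <;>
        rw [h, h'] <;> norm_num
  · rw [h1, Matrix.det_permute', Matrix.det_permute, ← mul_assoc]
    norm_cast

lemma dk_dvd {m' n' t : ℕ} (M : Matrix (Fin m') (Fin n') ℤ)
    (p1 : Fin t ↪ Fin m') (p2 : Fin t ↪ Fin n') :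
    Dk M t ∣ (M.submatrix ⇑p1 ⇑p2).det :=
  Finset.gcd_dvd (Finset.mem_univ (⟨p1, p2⟩ : _ × _))

lemma dk_succ_dvd {m' n' t : ℕ} (M : Matrix (Fin m') (Fin n') ℤ) :
    Dk M t ∣ Dk M (t+1) := by
  apply Finset.dvd_gcd
  intro p _
  rw [Matrix.det_succ_row_zero (M.submatrix ⇑p.1 ⇑p.2)]
  apply Finset.dvd_sum
  intro j _
  have h := dk_dvd M ((⟨Fin.succ, Fin.succ_injective t⟩ : Fin t ↪ Fin (t+1)).trans p.1)
    ((Fin.succAboveEmb j).trans p.2)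
  rw [Matrix.submatrix_submatrix] at *
  exact Dvd.dvd.mul_left h _

/-- for a symmetric `(n+1) × (n+1)` integer matrix `L` (with `n+1 ≥ 4`)
and its Chio condensation `L'`, for `2 ≤ k ≤ (n+1)−2` with `D_{k−1}(L') ≠ 0` and
`D_k(L) ≠ 0`, the invariant factor `α'_k = D_k(L')/D_{k−1}(L')` divides
`(g_n(L))² · d_n · α_{k+1}` where `α_{k+1} = D_{k+1}(L)/D_k(L)`. -/
theorem stmt16 {n : ℕ} (hn : 3 ≤ n) (L : Matrix (Fin (n+1)) (Fin (n+1)) ℤ)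
    (hsymm : L.IsSymm) (k : ℕ) (hk1 : 2 ≤ k) (hk2 : k ≤ n - 1)
    (hD' : Dk (chio L) (k - 1) ≠ 0) (hD : Dk L k ≠ 0) :
    Dk (chio L) k / Dk (chio L) (k - 1) ∣
      (lastRowGcd L) ^ 2 * L (Fin.last n) (Fin.last n) * (Dk L (k + 1) / Dk L k) := by
  obtain ⟨k', rfl⟩ : ∃ k', k = k' + 2 := ⟨k - 2, by omega⟩
  have hsub1 : k' + 2 - 1 = k' + 1 := rfl
  rw [hsub1] at hD' ⊢
  by_cases hd0 : L (Fin.last n) (Fin.last n) = 0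
  · rw [hd0]
    simp
  set d := L (Fin.last n) (Fin.last n) with hd
  set g := lastRowGcd L with hg
  have hkn3 : k' + 3 ≤ n := by omega
  have hP1 : DkStar L (k'+3) ∣ g ^ 2 * Dk L (k'+3) := P1 L (by omega) hkn3 hsymm
  -- (i)
  have hi0 : ∀ P : (Fin (k'+3) ↪ Fin (n+1)) × (Fin (k'+3) ↪ Fin (n+1)),
      (∃ i, P.1 i = Fin.last n) → (∃ j, P.2 j = Fin.last n) →
      Dk (chio L) (k'+2) * d ∣ d ^ (k'+2) * (L.submatrix ⇑P.1 ⇑P.2).det := by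
    intro P hP1r hP2r
    obtain ⟨ρ, σ, hρ⟩ := pinned_canonical P.1 hP1r
    obtain ⟨γ, τ, hγ⟩ := pinned_canonical P.2 hP2r
    obtain ⟨u, hu, hdet⟩ := det_submatrix_perm (L.submatrix ⇑P.1 ⇑P.2) σ τ
    have hsub : L.submatrix (extFun ⇑ρ) (extFun ⇑γ)
        = (L.submatrix ⇑P.1 ⇑P.2).submatrix ⇑σ ⇑τ := by
      rw [Matrix.submatrix_submatrix, hρ, hγ]
    have hsyl := chio_det_mul L (⇑ρ) (⇑γ)
    have ha : Dk (chio L) (k'+2) ∣ ((chio L).submatrix ⇑ρ ⇑γ).det := dk_dvd (chio L) ρ γ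
    apply dvd_of_dvd_unit_mul hu
    have hkey : u * (d ^ (k'+2) * (L.submatrix ⇑P.1 ⇑P.2).det)
        = ((chio L).submatrix ⇑ρ ⇑γ).det * d := by
      rw [hsyl, hsub, hdet]; ring
    rw [hkey]
    exact mul_dvd_mul ha dvd_rfl
  have hi : Dk (chio L) (k'+2) * d ∣ d ^ (k'+2) * DkStar L (k'+3) := by
    unfold DkStar
    apply dvd_gcd_mul_of_forall
    intro P hP
    rw [Finset.mem_filter] at hP
    exact hi0 P hP.2.1 hP.2.2
  -- (ii)
  have hii : d ^ (k'+1) * DkStar L (k'+2) ∣ Dk (chio L) (k'+1) * d := by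
    have h0 : ∀ q : (Fin (k'+1) ↪ Fin n) × (Fin (k'+1) ↪ Fin n),
        d ^ (k'+1) * DkStar L (k'+2) ∣ ((chio L).submatrix ⇑q.1 ⇑q.2).det * d := by
      intro q
      rw [chio_det_mul]
      exact mul_dvd_mul_left _ (dkstar_dvd_pinned L (extEmb q.1) (extEmb q.2)
        ⟨Fin.last _, extFun_last _⟩ ⟨Fin.last _, extFun_last _⟩)
    have h1 : d ^ (k'+1) * DkStar L (k'+2)
        ∣ Finset.univ.gcd (fun q : (Fin (k'+1) ↪ Fin n) × (Fin (k'+1) ↪ Fin n) =>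
            ((chio L).submatrix ⇑q.1 ⇑q.2).det * d) :=
      Finset.dvd_gcd (fun q _ => h0 q)
    rw [Finset.gcd_mul_right] at h1
    exact h1.trans (mul_dvd_mul_left _ (normalize_associated d).dvd)
  have hBD : Dk L (k'+2) ∣ DkStar L (k'+2) :=
    Finset.dvd_gcd (fun P _ => dk_dvd L P.1 P.2)
  -- main divisibility
  have hmain : Dk (chio L) (k'+2) * Dk L (k'+2)
      ∣ g ^ 2 * d * Dk L (k'+3) * Dk (chio L) (k'+1) := by
    have h1 : Dk (chio L) (k'+2) * d * Dk L (k'+2)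
        ∣ d ^ (k'+2) * DkStar L (k'+3) * Dk L (k'+2) :=
      mul_dvd_mul_right hi _
    have h2 : d ^ (k'+2) * DkStar L (k'+3) * Dk L (k'+2)
        ∣ d ^ (k'+2) * (g ^ 2 * Dk L (k'+3)) * DkStar L (k'+2) :=
      mul_dvd_mul (mul_dvd_mul_left _ hP1) hBD
    have h3 : d ^ (k'+2) * (g ^ 2 * Dk L (k'+3)) * DkStar L (k'+2)
        ∣ (g ^ 2 * Dk L (k'+3)) * (d * (Dk (chio L) (k'+1) * d)) := by
      have h3' := mul_dvd_mul_left d hii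
      calc d ^ (k'+2) * (g ^ 2 * Dk L (k'+3)) * DkStar L (k'+2)
          = (g ^ 2 * Dk L (k'+3)) * (d * (d ^ (k'+1) * DkStar L (k'+2))) := by ring
        _ ∣ (g ^ 2 * Dk L (k'+3)) * (d * (Dk (chio L) (k'+1) * d)) :=
            mul_dvd_mul_left _ h3'
    have h4 : Dk (chio L) (k'+2) * d * Dk L (k'+2)
        ∣ (g ^ 2 * d * Dk L (k'+3) * Dk (chio L) (k'+1)) * d :=
      ((h1.trans h2).trans h3).trans (dvd_of_eq (by ring))
    have h5 : (Dk (chio L) (k'+2) * Dk L (k'+2)) * d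
        ∣ (g ^ 2 * d * Dk L (k'+3) * Dk (chio L) (k'+1)) * d := by
      have heq : Dk (chio L) (k'+2) * d * Dk L (k'+2)
          = (Dk (chio L) (k'+2) * Dk L (k'+2)) * d := by ring
      rwa [heq] at h4
    exact (mul_dvd_mul_iff_right hd0).mp h5
  -- exact division
  obtain ⟨a1, ha1⟩ := dk_succ_dvd (chio L) (t := k'+1)
  obtain ⟨A1, hA1⟩ := dk_succ_dvd L (t := k'+2)
  rw [show k'+1+1 = k'+2 from rfl] at ha1
  rw [show k'+2+1 = k'+3 from rfl] at hA1
  rw [show k'+2+1 = k'+3 from rfl, ha1, hA1,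
    Int.mul_ediv_cancel_left _ hD', Int.mul_ediv_cancel_left _ hD]
  rw [ha1, hA1] at hmain
  have h6 : (Dk (chio L) (k'+1) * Dk L (k'+2)) * a1
      ∣ (Dk (chio L) (k'+1) * Dk L (k'+2)) * (g ^ 2 * d * A1) := by
    have heqL : (Dk (chio L) (k'+1) * Dk L (k'+2)) * a1
        = Dk (chio L) (k'+1) * a1 * Dk L (k'+2) := by ring
    have heqR : (Dk (chio L) (k'+1) * Dk L (k'+2)) * (g ^ 2 * d * A1)
        = g ^ 2 * d * (Dk L (k'+2) * A1) * Dk (chio L) (k'+1) := by ring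
    rw [heqL, heqR]
    exact hmain
  exact (mul_dvd_mul_iff_left (mul_ne_zero hD' hD)).mp h6

end Final
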